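/- For an attractive potential φ (subadditive, φ(0)=0, nondecreasing, with φ(ℓ)/ℓ → 0 as ℓ → ∞), the free energy λ₀ := lim_{n→∞} (1/n) log Σ_{|γ|=n} exp(−Φ(γ)) equals log(2d). -/

import Mathlib

open Finset Filter

/-- A step of the nearest-neighbor walk on `ℤ^d`: a coordinate direction and a sign. -/
def step (d : ℕ) (s : Fin d × Bool) : Fin d → ℤ :=
  fun j => if j = s.1 then (if s.2 then 1 else -1) else 0

/-- Position after `k` steps of the path encoded by the step sequence `ω` (starting at `0`). -/
def pathPos {d n : ℕ} (ω : Fin n → Fin d × Bool) (k : ℕ) : Fin d → ℤ :=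
  ∑ i ∈ Finset.range k, if h : i < n then step d (ω ⟨i, h⟩) else 0

/-- Local time of the path at the vertex `x`: number of indices `0 ≤ k ≤ n` with `γ(k) = x`. -/
def locTime {d n : ℕ} (ω : Fin n → Fin d × Bool) (x : Fin d → ℤ) : ℕ :=
  ((Finset.range (n + 1)).filter fun k => pathPos ω k = x).card

/-- Internal energy `Φ(γ) = ∑_x φ(ℓ_x(γ))` (only visited vertices contribute when `φ 0 = 0`). -/
noncomputable def energy {d n : ℕ} (φ : ℕ → ℝ) (ω : Fin n → Fin d × Bool) : ℝ :=
  ∑ x ∈ (Finset.range (n + 1)).image (pathPos ω), φ (locTime ω x)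

/-- Partition function of length-`n` nearest-neighbor paths on `ℤ^d` starting at the origin. -/
noncomputable def Zpart (d : ℕ) (φ : ℕ → ℝ) (n : ℕ) : ℝ :=
  ∑ ω : Fin n → Fin d × Bool, Real.exp (-(energy φ ω))


/-! ### tent weights -/

def tent (p : ℕ) (j : ℤ) : ℤ :=
  if 0 ≤ j ∧ j ≤ 2*p+1 then min (j+1) (2*p+2-j) else 0

lemma tent_nonneg (p : ℕ) (j : ℤ) : 0 ≤ tent p j := by
  unfold tent; split_ifs with h <;> omega

lemma tent_le (p : ℕ) (j : ℤ) : tent p j ≤ p+1 := by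
  unfold tent; split_ifs with h <;> omega

lemma tent_zero (p : ℕ) : tent p 0 = 1 := by unfold tent; split_ifs with h <;> omega

lemma tent_cases (p : ℕ) (j : ℤ) (h0 : 0 ≤ j) (h1 : j ≤ 2*p+1) :
    2*tent p j ≤ tent p (j-1) + tent p (j+1) ∨
    (tent p j = p+1 ∧ 2*(p:ℤ)+1 ≤ tent p (j-1) + tent p (j+1)) := by
  unfold tent; split_ifs <;> omega

lemma tent_key (p : ℕ) (j : ℤ) (h0 : 0 ≤ j) (h1 : j ≤ 2*p+1) :
    (2*(p:ℤ)+1) * tent p j ≤ (p+1) * (tent p (j-1) + tent p (j+1)) := by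
  rcases tent_cases p j h0 h1 with h | ⟨h, h'⟩
  · nlinarith [tent_nonneg p j]
  · nlinarith [tent_nonneg p j]

noncomputable def wt (p : ℕ) (j : ℤ) : ℝ := (tent p j : ℝ)

noncomputable def lam (p : ℕ) : ℝ := (2*p+1)/(p+1)

lemma lam_pos (p : ℕ) : 0 < lam p := by unfold lam; positivity

lemma one_le_lam (p : ℕ) : 1 ≤ lam p := by
  rw [lam, le_div_iff₀ (by positivity)]
  have : (0:ℝ) ≤ p := Nat.cast_nonneg p
  linarith

lemma lam_le_two (p : ℕ) : lam p ≤ 2 := by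
  rw [lam, div_le_iff₀ (by positivity)]
  have : (0:ℝ) ≤ p := Nat.cast_nonneg p
  linarith

lemma wt_nonneg (p : ℕ) (j : ℤ) : 0 ≤ wt p j := by
  unfold wt; exact_mod_cast tent_nonneg p j

lemma wt_le (p : ℕ) (j : ℤ) : wt p j ≤ p+1 := by
  unfold wt; exact_mod_cast tent_le p j

lemma wt_zero (p : ℕ) : wt p 0 = 1 := by unfold wt; rw [tent_zero]; norm_num

lemma wt_key (p : ℕ) (j : ℤ) (h0 : 0 ≤ j) (h1 : j ≤ 2*p+1) :
    lam p * wt p j ≤ wt p (j-1) + wt p (j+1) := by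
  rw [lam, div_mul_eq_mul_div, div_le_iff₀ (by positivity)]
  have h3 : (((2*(p:ℤ)+1) * tent p j : ℤ) : ℝ)
      ≤ (((p:ℤ)+1) * (tent p (j-1) + tent p (j+1)) : ℤ) := by
    exact_mod_cast (tent_key p j h0 h1)
  unfold wt
  push_cast at h3 ⊢
  linarith

def inBox (p : ℕ) {d : ℕ} (x : Fin d → ℤ) : Prop := ∀ j, 0 ≤ x j ∧ x j ≤ 2*p+1

noncomputable def uwt (p : ℕ) {d : ℕ} (x : Fin d → ℤ) : ℝ := ∏ j, wt p (x j)

lemma uwt_nonneg (p : ℕ) {d : ℕ} (x : Fin d → ℤ) : 0 ≤ uwt p x :=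
  Finset.prod_nonneg fun j _ => wt_nonneg p (x j)

lemma uwt_le (p : ℕ) {d : ℕ} (x : Fin d → ℤ) : uwt p x ≤ (p+1)^d := by
  calc uwt p x ≤ ∏ _j : Fin d, ((p:ℝ)+1) :=
        Finset.prod_le_prod (fun j _ => wt_nonneg p (x j)) (fun j _ => wt_le p (x j))
    _ = ((p:ℝ)+1)^d := by simp

lemma uwt_zero (p : ℕ) {d : ℕ} : uwt p (0 : Fin d → ℤ) = 1 := by
  unfold uwt
  simp [wt_zero]

lemma uwt_eq_zero (p : ℕ) {d : ℕ} (x : Fin d → ℤ) (h : ¬ inBox p x) : uwt p x = 0 := by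
  unfold inBox at h
  push_neg at h
  obtain ⟨j, hj⟩ := h
  refine Finset.prod_eq_zero (Finset.mem_univ j) ?_
  unfold wt tent
  rw [if_neg (by omega)]
  simp

lemma key_pointwise (p d : ℕ) (x : Fin d → ℤ) :
    (d : ℝ) * lam p * uwt p x ≤ ∑ s : Fin d × Bool, uwt p (x + step d s) := by
  by_cases hx : inBox p x
  · have hupd : ∀ (i : Fin d) (b : Bool),
        x + step d (i, b) = Function.update x i (x i + (if b then 1 else -1)) := by
      intro i b
      funext j
      by_cases hj : j = i
      · subst hj; simp [step, Function.update]
      · simp [step, Function.update, hj]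
    have huwt : ∀ (i : Fin d) (v : ℤ),
        uwt p (Function.update x i v) = wt p v * ∏ j ∈ Finset.univ \ {i}, wt p (x j) := by
      intro i v
      unfold uwt
      have : (fun j => wt p (Function.update x i v j))
          = Function.update (fun j => wt p (x j)) i (wt p v) :=
        funext fun j => Function.apply_update (fun _ y => wt p y) x i v j
      calc ∏ j, wt p (Function.update x i v j)
          = ∏ j, Function.update (fun j => wt p (x j)) i (wt p v) j := by rw [this]
        _ = wt p v * ∏ j ∈ Finset.univ \ {i}, wt p (x j) :=
            Finset.prod_update_of_mem (Finset.mem_univ i) _ _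
    rw [Fintype.sum_prod_type]
    have hone : ∀ i : Fin d,
        lam p * uwt p x ≤ ∑ b : Bool, uwt p (x + step d (i, b)) := by
      intro i
      have hP : (0:ℝ) ≤ ∏ j ∈ Finset.univ \ {i}, wt p (x j) :=
        Finset.prod_nonneg fun j _ => wt_nonneg p (x j)
      have hux : uwt p x = wt p (x i) * ∏ j ∈ Finset.univ \ {i}, wt p (x j) := by
        rw [← huwt i (x i), Function.update_eq_self]
      rw [Fintype.sum_bool, hupd, hupd, huwt, huwt, hux]
      have hk := wt_key p (x i) (hx i).1 (hx i).2
      simp only [if_true, if_false, show x i + (-1:ℤ) = x i - 1 from by ring]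
      calc lam p * (wt p (x i) * ∏ j ∈ Finset.univ \ {i}, wt p (x j))
          = (lam p * wt p (x i)) * ∏ j ∈ Finset.univ \ {i}, wt p (x j) := by ring
        _ ≤ (wt p (x i - 1) + wt p (x i + 1)) * ∏ j ∈ Finset.univ \ {i}, wt p (x j) :=
            mul_le_mul_of_nonneg_right hk hP
        _ = wt p (x i + 1) * (∏ j ∈ Finset.univ \ {i}, wt p (x j))
            + wt p (x i - 1) * ∏ j ∈ Finset.univ \ {i}, wt p (x j) := by ring
    calc (d : ℝ) * lam p * uwt p x = ∑ _i : Fin d, lam p * uwt p x := by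
          rw [Finset.sum_const]; simp [mul_assoc]
      _ ≤ ∑ i : Fin d, ∑ b : Bool, uwt p (x + step d (i, b)) :=
          Finset.sum_le_sum fun i _ => hone i
  · rw [uwt_eq_zero p x hx, mul_zero]
    exact Finset.sum_nonneg fun s _ => uwt_nonneg p _

/-! ### path lemmas -/

lemma pathPos_zero {d n : ℕ} (ω : Fin n → Fin d × Bool) : pathPos ω 0 = 0 := by
  simp [pathPos]

lemma pathPos_snoc {d m : ℕ} (ω : Fin m → Fin d × Bool) (s : Fin d × Bool)
    (k : ℕ) (hk : k ≤ m) : pathPos (Fin.snoc ω s) k = pathPos ω k := by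
  unfold pathPos
  refine Finset.sum_congr rfl fun i hi => ?_
  have him : i < m := lt_of_lt_of_le (Finset.mem_range.mp hi) hk
  rw [dif_pos him, dif_pos (Nat.lt_succ_of_lt him)]
  have : (⟨i, Nat.lt_succ_of_lt him⟩ : Fin (m+1)) = Fin.castSucc ⟨i, him⟩ := rfl
  rw [this, Fin.snoc_castSucc]

lemma pathPos_snoc_last {d m : ℕ} (ω : Fin m → Fin d × Bool) (s : Fin d × Bool) :
    pathPos (Fin.snoc ω s) (m+1) = pathPos ω m + step d s := by
  unfold pathPos
  rw [Finset.sum_range_succ]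
  have h2 : (∑ i ∈ Finset.range m,
      if h : i < m+1 then step d ((Fin.snoc ω s : Fin (m+1) → Fin d × Bool) ⟨i, h⟩) else 0)
      = pathPos ω m := pathPos_snoc ω s m le_rfl
  rw [h2, dif_pos (Nat.lt_succ_self m)]
  congr 1
  have h3 : (⟨m, Nat.lt_succ_self m⟩ : Fin (m+1)) = Fin.last m := rfl
  rw [h3, Fin.snoc_last]

/-! ### confined paths and the weighted count -/

def conf (p : ℕ) {d n : ℕ} (ω : Fin n → Fin d × Bool) : Prop :=
  ∀ k ≤ n, inBox p (pathPos ω k)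

open scoped Classical in
noncomputable def Wsum (p d m : ℕ) : ℝ :=
  ∑ ω : Fin m → Fin d × Bool, if conf p ω then uwt p (pathPos ω m) else 0

lemma conf_snoc_iff (p : ℕ) {d m : ℕ} (ω : Fin m → Fin d × Bool) (s : Fin d × Bool) :
    conf p (Fin.snoc ω s : Fin (m+1) → Fin d × Bool)
      ↔ conf p ω ∧ inBox p (pathPos ω m + step d s) := by
  constructor
  · intro h
    refine ⟨fun k hk => ?_, ?_⟩
    · have := h k (le_trans hk (Nat.le_succ m))
      rwa [pathPos_snoc ω s k hk] at this
    · have := h (m+1) le_rfl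
      rwa [pathPos_snoc_last] at this
  · rintro ⟨h1, h2⟩ k hk
    rcases Nat.lt_succ_iff_lt_or_eq.mp (Nat.lt_succ_of_le hk) with hk' | hk'
    · rw [pathPos_snoc ω s k (Nat.lt_succ_iff.mp hk')]
      exact h1 k (Nat.lt_succ_iff.mp hk')
    · subst hk'
      rwa [pathPos_snoc_last]

lemma Wsum_zero (p d : ℕ) : Wsum p d 0 = 1 := by
  classical
  unfold Wsum
  rw [Fintype.sum_unique]
  have hconf : conf p (default : Fin 0 → Fin d × Bool) := by
    intro k hk
    have hk0 : k = 0 := Nat.le_zero.mp hk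
    subst hk0
    rw [pathPos_zero]
    intro j
    refine ⟨le_refl 0, by positivity⟩
  rw [if_pos hconf, pathPos_zero, uwt_zero]

lemma Wsum_succ_ge (p d m : ℕ) : (d : ℝ) * lam p * Wsum p d m ≤ Wsum p d (m+1) := by
  classical
  unfold Wsum
  rw [← Equiv.sum_comp (Fin.snocEquiv (fun _ => Fin d × Bool))
      (fun ω : Fin (m+1) → Fin d × Bool => if conf p ω then uwt p (pathPos ω (m+1)) else 0),
    Fintype.sum_prod_type]
  rw [Finset.mul_sum]
  rw [Finset.sum_comm]
  refine Finset.sum_le_sum fun ω _ => ?_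
  by_cases hc : conf p ω
  · have : ∀ s : Fin d × Bool,
        (if conf p ((Fin.snocEquiv (fun _ => Fin d × Bool)) (s, ω))
          then uwt p (pathPos ((Fin.snocEquiv (fun _ => Fin d × Bool)) (s, ω)) (m+1)) else 0)
        = uwt p (pathPos ω m + step d s) := by
      intro s
      have he : ((Fin.snocEquiv (fun _ => Fin d × Bool)) (s, ω))
          = (Fin.snoc ω s : Fin (m+1) → Fin d × Bool) := rfl
      rw [he]
      by_cases hb : inBox p (pathPos ω m + step d s)
      · rw [if_pos ((conf_snoc_iff p ω s).mpr ⟨hc, hb⟩), pathPos_snoc_last]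
      · rw [if_neg (fun hcc => hb ((conf_snoc_iff p ω s).mp hcc).2),
          uwt_eq_zero p _ hb]
    rw [if_pos hc]
    calc (d:ℝ) * lam p * uwt p (pathPos ω m)
        ≤ ∑ s : Fin d × Bool, uwt p (pathPos ω m + step d s) := key_pointwise p d _
      _ = ∑ s : Fin d × Bool,
          (if conf p ((Fin.snocEquiv (fun _ => Fin d × Bool)) (s, ω))
            then uwt p (pathPos ((Fin.snocEquiv (fun _ => Fin d × Bool)) (s, ω)) (m+1)) else 0) := by
          exact (Finset.sum_congr rfl fun s _ => (this s).symm)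
  · rw [if_neg hc, mul_zero]
    refine Finset.sum_nonneg fun s _ => ?_
    split_ifs
    · exact uwt_nonneg p _
    · exact le_refl _

lemma Wsum_ge (p d : ℕ) (m : ℕ) : ((d:ℝ) * lam p)^m ≤ Wsum p d m := by
  induction m with
  | zero => rw [pow_zero, Wsum_zero]
  | succ m ih =>
    have hnn : (0:ℝ) ≤ (d:ℝ) * lam p := mul_nonneg (Nat.cast_nonneg d) (le_of_lt (lam_pos p))
    calc ((d:ℝ) * lam p)^(m+1) = (d:ℝ) * lam p * ((d:ℝ) * lam p)^m := by ring
      _ ≤ (d:ℝ) * lam p * Wsum p d m := mul_le_mul_of_nonneg_left ih hnn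
      _ ≤ Wsum p d (m+1) := Wsum_succ_ge p d m

open scoped Classical in
noncomputable def Nconf (p d m : ℕ) : ℝ :=
  ∑ ω : Fin m → Fin d × Bool, if conf p ω then (1:ℝ) else 0

lemma Nconf_ge (p d m : ℕ) :
    ((d:ℝ) * lam p)^m ≤ ((p:ℝ)+1)^d * Nconf p d m := by
  classical
  refine le_trans (Wsum_ge p d m) ?_
  unfold Wsum Nconf
  rw [Finset.mul_sum]
  refine Finset.sum_le_sum fun ω _ => ?_
  split_ifs with h
  · rw [mul_one]; exact uwt_le p _
  · rw [mul_zero]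

lemma locTime_le {d n : ℕ} (ω : Fin n → Fin d × Bool) (x : Fin d → ℤ) :
    locTime ω x ≤ n+1 := by
  unfold locTime
  calc _ ≤ (Finset.range (n+1)).card := Finset.card_filter_le _ _
    _ = n+1 := Finset.card_range _

lemma energy_nonneg {d n : ℕ} (φ : ℕ → ℝ) (hφ0 : φ 0 = 0) (hmono : Monotone φ)
    (ω : Fin n → Fin d × Bool) : 0 ≤ energy φ ω :=
  Finset.sum_nonneg fun x _ => hφ0 ▸ hmono (Nat.zero_le _)

lemma energy_le_of_conf {d n : ℕ} (p : ℕ) (φ : ℕ → ℝ) (hφ0 : φ 0 = 0) (hmono : Monotone φ)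
    (ω : Fin n → Fin d × Bool) (hconf : conf p ω) :
    energy φ ω ≤ ((2*(p:ℝ)+2)^d) * φ (n+1) := by
  have hφpos : 0 ≤ φ (n+1) := hφ0 ▸ hmono (Nat.zero_le _)
  have hsub : (Finset.range (n + 1)).image (pathPos ω)
      ⊆ Fintype.piFinset (fun _ : Fin d => Finset.Icc (0:ℤ) (2*p+1)) := by
    intro x hx
    obtain ⟨k, hk, hkx⟩ := Finset.mem_image.mp hx
    have hbox := hconf k (Nat.lt_succ_iff.mp (Finset.mem_range.mp hk))
    rw [hkx] at hbox
    rw [Fintype.mem_piFinset]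
    intro j
    rw [Finset.mem_Icc]
    exact hbox j
  have hcard : ((Finset.range (n + 1)).image (pathPos ω)).card ≤ (2*p+2)^d := by
    calc _ ≤ (Fintype.piFinset (fun _ : Fin d => Finset.Icc (0:ℤ) (2*p+1))).card :=
          Finset.card_le_card hsub
      _ = (2*p+2)^d := by
          rw [Fintype.card_piFinset]
          have hc : (Finset.Icc (0:ℤ) (2*p+1)).card = 2*p+2 := by
            rw [Int.card_Icc]; omega
          simp only [hc, Finset.prod_const, Finset.card_univ, Fintype.card_fin]
  calc energy φ ω ≤ ∑ _x ∈ (Finset.range (n + 1)).image (pathPos ω), φ (n+1) :=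
        Finset.sum_le_sum fun x _ => hmono (locTime_le ω x)
    _ = (((Finset.range (n + 1)).image (pathPos ω)).card : ℝ) * φ (n+1) := by
        rw [Finset.sum_const, nsmul_eq_mul]
    _ ≤ ((2*(p:ℝ)+2)^d) * φ (n+1) := by
        refine mul_le_mul_of_nonneg_right ?_ hφpos
        calc (((Finset.range (n + 1)).image (pathPos ω)).card : ℝ)
            ≤ (((2*p+2)^d : ℕ) : ℝ) := by exact_mod_cast hcard
          _ = (2*(p:ℝ)+2)^d := by push_cast; ring_nf

lemma Zpart_ge {d n : ℕ} (p : ℕ) (φ : ℕ → ℝ) (hφ0 : φ 0 = 0) (hmono : Monotone φ) :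
    Nconf p d n * Real.exp (-(((2*(p:ℝ)+2)^d) * φ (n+1))) ≤ Zpart d φ n := by
  classical
  unfold Zpart Nconf
  rw [Finset.sum_mul]
  refine Finset.sum_le_sum fun ω _ => ?_
  split_ifs with h
  · rw [one_mul]
    exact Real.exp_le_exp.mpr (neg_le_neg (energy_le_of_conf p φ hφ0 hmono ω h))
  · rw [zero_mul]
    exact le_of_lt (Real.exp_pos _)

lemma Zpart_le {d n : ℕ} (φ : ℕ → ℝ) (hφ0 : φ 0 = 0) (hmono : Monotone φ) :
    Zpart d φ n ≤ (2*(d:ℝ))^n := by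
  classical
  unfold Zpart
  calc (∑ ω : Fin n → Fin d × Bool, Real.exp (-(energy φ ω)))
      ≤ ∑ _ω : Fin n → Fin d × Bool, 1 := by
        refine Finset.sum_le_sum fun ω _ => ?_
        rw [Real.exp_le_one_iff, neg_nonpos]
        exact energy_nonneg φ hφ0 hmono ω
    _ = ((Fintype.card (Fin n → Fin d × Bool) : ℕ) : ℝ) := by
        rw [Finset.sum_const, Finset.card_univ, nsmul_eq_mul, mul_one]
    _ = (2*(d:ℝ))^n := by
        rw [Fintype.card_fun, Fintype.card_prod, Fintype.card_fin, Fintype.card_bool,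
          Fintype.card_fin]
        push_cast
        ring

lemma Nconf_pos (p : ℕ) {d : ℕ} (hd : 0 < d) (m : ℕ) : 0 < Nconf p d m := by
  have h1 : (0:ℝ) < ((d:ℝ) * lam p)^m := by
    apply pow_pos
    have : (0:ℝ) < d := by exact_mod_cast hd
    exact mul_pos this (lam_pos p)
  have h2 := Nconf_ge p d m
  nlinarith [pow_pos (show (0:ℝ) < (p:ℝ)+1 by positivity) d]

lemma log_Zpart_ge {d : ℕ} (hd : 0 < d) (p n : ℕ) (φ : ℕ → ℝ)
    (hφ0 : φ 0 = 0) (hmono : Monotone φ) :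
    (n:ℝ) * Real.log ((d:ℝ) * lam p) - (d:ℝ) * Real.log ((p:ℝ)+1)
      - ((2*(p:ℝ)+2)^d) * φ (n+1) ≤ Real.log (Zpart d φ n) := by
  have hdR : (0:ℝ) < d := by exact_mod_cast hd
  have hdl : (0:ℝ) < (d:ℝ) * lam p := mul_pos hdR (lam_pos p)
  have hp1 : (0:ℝ) < ((p:ℝ)+1)^d := by positivity
  set A : ℝ := ((d:ℝ) * lam p)^n / ((p:ℝ)+1)^d with hA
  have hApos : 0 < A := by positivity
  set c : ℝ := ((2*(p:ℝ)+2)^d) * φ (n+1) with hc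
  have hNA : A ≤ Nconf p d n := by
    rw [hA, div_le_iff₀ hp1]
    have := Nconf_ge p d n
    linarith
  have hZ : A * Real.exp (-c) ≤ Zpart d φ n := by
    calc A * Real.exp (-c) ≤ Nconf p d n * Real.exp (-c) :=
          mul_le_mul_of_nonneg_right hNA (le_of_lt (Real.exp_pos _))
      _ ≤ Zpart d φ n := Zpart_ge p φ hφ0 hmono
  have hlog : Real.log (A * Real.exp (-c)) ≤ Real.log (Zpart d φ n) :=
    Real.log_le_log (by positivity) hZ
  have heq : Real.log (A * Real.exp (-c))
      = (n:ℝ) * Real.log ((d:ℝ) * lam p) - (d:ℝ) * Real.log ((p:ℝ)+1) - c := by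
    rw [Real.log_mul (ne_of_gt hApos) (ne_of_gt (Real.exp_pos _)), Real.log_exp, hA,
      Real.log_div (by positivity) (by positivity), Real.log_pow, Real.log_pow]
    push_cast
    ring
  linarith [heq ▸ hlog]

lemma Zpart_pos {d : ℕ} (hd : 0 < d) (φ : ℕ → ℝ) (n : ℕ) : 0 < Zpart d φ n := by
  have : Nonempty (Fin n → Fin d × Bool) := ⟨fun _ => (⟨0, hd⟩, true)⟩
  exact Finset.sum_pos (fun ω _ => Real.exp_pos _) Finset.univ_nonempty

lemma log_gap {d : ℕ} (hd : 0 < d) (p : ℕ) :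
    Real.log (2*(d:ℝ)) - Real.log ((d:ℝ) * lam p) ≤ 1/((p:ℝ)+1) := by
  have hdR : (0:ℝ) < d := by exact_mod_cast hd
  have hl := lam_pos p
  rw [← Real.log_div (by positivity) (by positivity)]
  have h2 : (2*(d:ℝ))/((d:ℝ)*lam p) = 2/lam p := by
    rw [mul_comm 2 (d:ℝ), mul_div_mul_left _ _ (ne_of_gt hdR)]
  rw [h2]
  have h3 := Real.log_le_sub_one_of_pos (show (0:ℝ) < 2/lam p by positivity)
  have h4 : 2/lam p ≤ 1 + 1/((p:ℝ)+1) := by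
    rw [lam, div_div_eq_mul_div, div_le_iff₀ (by positivity)]
    have hp : (0:ℝ) ≤ p := Nat.cast_nonneg p
    have hq : (0:ℝ) < (p:ℝ)+1 := by positivity
    have hinv : (1/((p:ℝ)+1)) * ((p:ℝ)+1) = 1 := by field_simp
    have ht : (0:ℝ) < 1/((p:ℝ)+1) := by positivity
    nlinarith [mul_nonneg ht.le hp]
  linarith

/-- For an attractive potential (subadditive, `φ 0 = 0`, nondecreasing, `φ(ℓ)/ℓ → 0`),
the free energy `λ₀ = lim (1/n) log Z_n` equals `log (2d)`. -/
theorem free_energy_attractive_eq_log_two_d (d : ℕ) (hd : 0 < d) (φ : ℕ → ℝ)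
    (hφ0 : φ 0 = 0) (hmono : Monotone φ)
    (hsub : ∀ ℓ₁ ℓ₂ : ℕ, φ (ℓ₁ + ℓ₂) ≤ φ ℓ₁ + φ ℓ₂)
    (hsublin : Tendsto (fun ℓ : ℕ => φ ℓ / (ℓ : ℝ)) atTop (nhds 0)) :
    Tendsto (fun n : ℕ => Real.log (Zpart d φ n) / (n : ℝ)) atTop
      (nhds (Real.log (2 * d))) := by
  have hdR : (0:ℝ) < d := by exact_mod_cast hd
  rw [Metric.tendsto_atTop]
  intro ε hε
  -- choose the box parameter p
  obtain ⟨p, hp⟩ : ∃ p : ℕ, 1/((p:ℝ)+1) < ε/4 := by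
    obtain ⟨p, hp⟩ := exists_nat_gt (4/ε)
    refine ⟨p, ?_⟩
    rw [div_lt_iff₀ (by positivity)]
    rw [div_lt_iff₀ hε] at hp
    nlinarith
  set C : ℝ := (2*(p:ℝ)+2)^d with hC
  have hC0 : 0 ≤ C := by positivity
  set c2 : ℝ := (d:ℝ) * Real.log ((p:ℝ)+1) with hc2
  have hc20 : 0 ≤ c2 := mul_nonneg (Nat.cast_nonneg d)
    (Real.log_nonneg (by have h : (0:ℝ) ≤ p := Nat.cast_nonneg p; linarith))
  -- eventual bounds
  have E1 : ∀ᶠ n : ℕ in atTop, c2/(n:ℝ) < ε/4 := by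
    have h1 : Tendsto (fun n : ℕ => c2 / (n:ℝ)) atTop (nhds 0) :=
      tendsto_const_div_atTop_nhds_zero_nat c2
    exact h1.eventually_lt_const (by positivity)
  have hphi1 : Tendsto (fun n : ℕ => φ (n+1) / (((n:ℝ))+1)) atTop (nhds 0) := by
    refine (hsublin.comp (tendsto_add_atTop_nat 1)).congr fun n => ?_
    simp only [Function.comp_apply]
    push_cast
    ring
  have hphin : Tendsto (fun n : ℕ => C * φ (n+1) / (n:ℝ)) atTop (nhds 0) := by
    apply squeeze_zero' (g := fun n : ℕ => 2*C*φ (n+1) / ((n:ℝ)+1))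
    · filter_upwards [eventually_ge_atTop 1] with n hn
      have hnR : (1:ℝ) ≤ n := by exact_mod_cast hn
      have hφpos : 0 ≤ φ (n+1) := hφ0 ▸ hmono (Nat.zero_le _)
      positivity
    · filter_upwards [eventually_ge_atTop 1] with n hn
      have hnR : (1:ℝ) ≤ n := by exact_mod_cast hn
      have hφpos : 0 ≤ φ (n+1) := hφ0 ▸ hmono (Nat.zero_le _)
      rw [div_le_div_iff₀ (by linarith) (by linarith)]
      nlinarith [mul_nonneg hC0 hφpos]
    · have h := hphi1.const_mul (2*C)
      rw [mul_zero] at h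
      exact h.congr fun n => by ring
  have E2 : ∀ᶠ n : ℕ in atTop, C * φ (n+1) / (n:ℝ) < ε/4 :=
    hphin.eventually_lt_const (by positivity)
  rw [eventually_atTop] at E1 E2
  obtain ⟨N1, hN1⟩ := E1
  obtain ⟨N2, hN2⟩ := E2
  refine ⟨max 1 (max N1 N2), fun n hn => ?_⟩
  have hn1 : 1 ≤ n := le_trans (le_max_left _ _) hn
  have hnN1 : N1 ≤ n := le_trans (le_trans (le_max_left _ _) (le_max_right 1 _)) hn
  have hnN2 : N2 ≤ n := le_trans (le_trans (le_max_right _ _) (le_max_right 1 _)) hn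
  have hnR : (1:ℝ) ≤ n := by exact_mod_cast hn1
  have hnpos : (0:ℝ) < n := by linarith
  -- upper bound
  have hub : Real.log (Zpart d φ n) / (n:ℝ) ≤ Real.log (2*(d:ℝ)) := by
    rw [div_le_iff₀ hnpos]
    calc Real.log (Zpart d φ n) ≤ Real.log ((2*(d:ℝ))^n) :=
          Real.log_le_log (Zpart_pos hd φ n) (Zpart_le φ hφ0 hmono)
      _ = (n:ℝ) * Real.log (2*(d:ℝ)) := by rw [Real.log_pow]
      _ = Real.log (2*(d:ℝ)) * n := by ring
  -- lower bound
  have hlb : Real.log (2*(d:ℝ)) - ε < Real.log (Zpart d φ n) / (n:ℝ) := by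
    have h1 := log_Zpart_ge hd p n φ hφ0 hmono
    have h2 : ((n:ℝ) * Real.log ((d:ℝ) * lam p) - c2 - C * φ (n+1)) / (n:ℝ)
        ≤ Real.log (Zpart d φ n) / (n:ℝ) :=
      div_le_div_of_nonneg_right ((by linarith : _ ≤ Real.log (Zpart d φ n))) hnpos.le
    have h3 : ((n:ℝ) * Real.log ((d:ℝ) * lam p) - c2 - C * φ (n+1)) / (n:ℝ)
        = Real.log ((d:ℝ) * lam p) - c2/(n:ℝ) - C * φ (n+1) / (n:ℝ) := by
      field_simp
    have h4 := hN1 n hnN1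
    have h5 := hN2 n hnN2
    have h6 := log_gap hd p
    rw [h3] at h2
    have : Real.log (2*(d:ℝ)) ≤ Real.log ((d:ℝ) * lam p) + 1/((p:ℝ)+1) := by linarith
    linarith
  have hcast : Real.log (2*(d:ℕ):ℝ) = Real.log (2*(d:ℝ)) := by push_cast; ring_nf
  rw [Real.dist_eq, abs_lt]
  constructor
  · push_cast
    linarith
  · push_cast
    linarith
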